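/- For every nonnegative integer n and every real t > 0, the Bessel functions of integer order satisfy (1/n!) (2/t)^n J_n(t) = Σ_{k=0}^{n} ε_k · J_{2k}(t) / ((n+k)! (n-k)!), where ε_0 = 1 and ε_k = 2 for k ≥ 1. -/

import Mathlib

open Finset

noncomputable section

/-- The Bessel function of the first kind of order `ν`:
`J_ν(t) = (t/2)^ν Σ_{k=0}^∞ (-1)^k/(Γ(k+1)Γ(k+ν+1)) (t/2)^{2k}`. -/
def besselJ (ν t : ℝ) : ℝ :=
  (t / 2) ^ ν *
    ∑' k : ℕ, (-1) ^ k / (Real.Gamma (k + 1) * Real.Gamma (k + ν + 1)) * (t / 2) ^ (2 * k)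

open Polynomial

set_option maxRecDepth 8000

lemma coeff_one_sub_X_pow (N j : ℕ) :
    ((1 - X : Polynomial ℤ) ^ N).coeff j = (-1) ^ j * N.choose j := by
  have h : (1 - X : Polynomial ℤ) = -X + 1 := by ring
  rw [h, add_pow, finset_sum_coeff]
  have hterm : ∀ k, (((-X : Polynomial ℤ)) ^ k * 1 ^ (N - k) * (N.choose k : ℤ[X])).coeff j
      = if k = j then ((-1 : ℤ)) ^ j * (N.choose j : ℤ) else 0 := by
    intro k
    have he : ((-X : Polynomial ℤ)) ^ k * 1 ^ (N - k) * (N.choose k : ℤ[X])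
        = C ((-1) ^ k * (N.choose k : ℤ)) * X ^ k := by
      simp only [map_mul, map_pow, map_neg, C_1, map_natCast]
      ring
    rw [he, coeff_C_mul, coeff_X_pow]
    by_cases hk : k = j
    · simp [hk]
    · simp [hk, Ne.symm hk]
  simp only [hterm]
  rw [Finset.sum_ite_eq' (range (N+1)) j]
  by_cases hj : j ∈ range (N+1)
  · simp [hj]
  · rw [if_neg hj, Nat.choose_eq_zero_of_lt (by simpa using hj)]
    simp

lemma coeff_one_sub_X_sq_pow (N m : ℕ) (hm : m ≤ N) :
    ((1 - X ^ 2 : Polynomial ℤ) ^ N).coeff (2 * m) = (-1) ^ m * N.choose m := by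
  have h : (1 - X ^ 2 : Polynomial ℤ) = -(X ^ 2) + 1 := by ring
  rw [h, add_pow, finset_sum_coeff]
  have hterm : ∀ k, (((-(X ^ 2) : Polynomial ℤ)) ^ k * 1 ^ (N - k) * (N.choose k : ℤ[X])).coeff (2 * m)
      = if k = m then ((-1 : ℤ)) ^ m * (N.choose m : ℤ) else 0 := by
    intro k
    have he : ((-(X ^ 2) : Polynomial ℤ)) ^ k * 1 ^ (N - k) * (N.choose k : ℤ[X])
        = C ((-1) ^ k * (N.choose k : ℤ)) * X ^ (2 * k) := by
      simp only [map_mul, map_pow, map_neg, C_1, map_natCast]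
      ring
    rw [he, coeff_C_mul, coeff_X_pow]
    by_cases hk : k = m
    · simp [hk]
    · have : ¬(2 * m = 2 * k) := by omega
      simp [hk, this]
  simp only [hterm]
  rw [Finset.sum_ite_eq' (range (N+1)) m]
  simp [Nat.lt_succ_iff.mpr hm]

lemma identA (N m : ℕ) (hm : m ≤ N) :
    ∑ j ∈ range (2 * m + 1), (-1 : ℤ) ^ j * (N.choose j) * (N.choose (2 * m - j))
      = (-1) ^ m * N.choose m := by
  have key : ((1 - X ^ 2 : Polynomial ℤ) ^ N) = (1 - X : Polynomial ℤ) ^ N * (1 + X) ^ N := by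
    rw [← mul_pow]; ring_nf
  have := coeff_one_sub_X_sq_pow N m hm
  rw [key, coeff_mul, Finset.Nat.sum_antidiagonal_eq_sum_range_succ_mk] at this
  rw [← this]
  refine Finset.sum_congr rfl fun j _ => ?_
  rw [coeff_one_sub_X_pow, coeff_one_add_X_pow]

lemma npows (m k : ℕ) (h : k ≤ m) : (-1 : ℤ) ^ (m - k) = (-1) ^ m * (-1) ^ k := by
  rw [← pow_add, neg_one_pow_eq_pow_mod_two, neg_one_pow_eq_pow_mod_two (n := m + k)]
  congr 1
  omega

lemma identB (n m : ℕ) :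
    ∑ k ∈ range (n + 1), (if k = 0 then (1 : ℤ) else 2) * ((-1) ^ k *
        ((n + m).choose (n + k)) * ((n + m).choose (m + k)))
      = (n + m).choose n := by
  set N := n + m with hN
  set g : ℕ → ℤ := fun k => (-1) ^ k * (N.choose (n + k)) * (N.choose (m + k)) with hg
  have hvan : ∀ k, n < k ∨ m < k → g k = 0 := by
    intro k hk
    rcases hk with hk | hk
    · have : N < m + k := by omega
      simp [hg, Nat.choose_eq_zero_of_lt this]
    · have : N < n + k := by omega
      simp [hg, Nat.choose_eq_zero_of_lt this]
  have htr : ∀ a : ℕ, a ≤ max n m → (∀ k, a < k → g k = 0) →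
      ∑ k ∈ range (max n m + 1), (if k = 0 then (1 : ℤ) else 2) * g k
        = ∑ k ∈ range (a + 1), (if k = 0 then (1 : ℤ) else 2) * g k := by
    intro a ha2 ha
    refine (Finset.sum_subset ?_ ?_).symm
    · intro x hx; simp at hx ⊢; omega
    · intro x hx hx2
      simp only [Finset.mem_range] at hx hx2
      rw [ha x (by omega), mul_zero]
  have htrunc : ∑ k ∈ range (n + 1), (if k = 0 then (1 : ℤ) else 2) * g k
      = ∑ k ∈ range (m + 1), (if k = 0 then (1 : ℤ) else 2) * g k := by
    rw [← htr n (le_max_left _ _) (fun k hk => hvan k (Or.inl hk)),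
      htr m (le_max_right _ _) (fun k hk => hvan k (Or.inr hk))]
  rw [htrunc]
  -- now use identA
  have hA := identA N m (by omega)
  set f : ℕ → ℤ := fun j => (-1) ^ j * (N.choose j) * (N.choose (2 * m - j)) with hf
  have hsplit : ∑ j ∈ range (2 * m + 1), f j
      = ∑ j ∈ range (m + 1), f j + ∑ j ∈ Finset.Ico (m + 1) (2 * m + 1), f j := by
    simp only [Finset.range_eq_Ico]
    exact (Finset.sum_Ico_consecutive f (Nat.zero_le _) (by omega)).symm
  have hpart1 : ∑ j ∈ range (m + 1), f j = (-1) ^ m * ∑ k ∈ range (m + 1), g k := by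
    rw [Finset.mul_sum, ← Finset.sum_range_reflect]
    refine Finset.sum_congr rfl fun k hk => ?_
    simp only [Finset.mem_range] at hk
    have hkm : k ≤ m := by omega
    have h1 : m + 1 - 1 - k = m - k := by omega
    have h2 : 2 * m - (m - k) = m + k := by omega
    have h3 : N.choose (m - k) = N.choose (n + k) := by
      have : m - k = N - (n + k) := by omega
      rw [this, Nat.choose_symm (by omega)]
    simp only [hf, hg, h1, h2, h3, npows m k hkm]
    ring
  have hpart2 : ∑ j ∈ Finset.Ico (m + 1) (2 * m + 1), f j
      = (-1) ^ m * ∑ k ∈ range m, g (k + 1) := by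
    rw [Finset.sum_Ico_eq_sum_range, Finset.mul_sum]
    have : 2 * m + 1 - (m + 1) = m := by omega
    rw [this]
    refine Finset.sum_congr rfl fun k hk => ?_
    simp only [Finset.mem_range] at hk
    have h2 : 2 * m - (m + 1 + k) = m - (k + 1) := by omega
    have h3 : N.choose (m - (k + 1)) = N.choose (n + (k + 1)) := by
      have : m - (k + 1) = N - (n + (k + 1)) := by omega
      rw [this, Nat.choose_symm (by omega)]
    have h4 : (-1 : ℤ) ^ (m + 1 + k) = (-1) ^ m * (-1) ^ (k + 1) := by
      rw [← pow_add]; congr 1; omega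
    have h5 : N.choose (m + 1 + k) = N.choose (m + (k + 1)) := by congr 1; omega
    simp only [hf, hg, h2, h3, h4, h5]
    ring
  have hshift : ∑ k ∈ range (m + 1), g k = ∑ k ∈ range m, g (k + 1) + g 0 :=
    Finset.sum_range_succ' g m
  have heps : ∑ k ∈ range (m + 1), (if k = 0 then (1 : ℤ) else 2) * g k
      = 2 * ∑ k ∈ range (m + 1), g k - g 0 := by
    rw [Finset.sum_range_succ' (fun k => (if k = 0 then (1 : ℤ) else 2) * g k) m, hshift]
    simp only [Nat.succ_ne_zero, if_false, eq_self_iff_true, if_true]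
    rw [← Finset.mul_sum]
    ring
  have hchoose : (N.choose n : ℤ) = N.choose m := by
    have : n = N - m := by omega
    rw [this, Nat.choose_symm (by omega)]
  have hT : (-1 : ℤ) ^ m * (2 * ∑ k ∈ range (m + 1), g k - g 0) = (-1) ^ m * N.choose m := by
    rw [← hA, hsplit, hpart1, hpart2, hshift]
    ring
  have hmul := mul_left_cancel₀ (a := (-1 : ℤ) ^ m) (by positivity) hT
  rw [heps, hmul, hchoose]

open Nat in
lemma choose_cast_eq (a b : ℕ) (h : a ≤ b) :
    ((b.choose a : ℝ)) = b ! / (a ! * (b - a)!) := by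
  have h0 := Nat.choose_mul_factorial_mul_factorial h
  have h1 : ((b.choose a * a ! * (b - a)! : ℕ) : ℝ) = ((b ! : ℕ) : ℝ) := by rw [h0]
  push_cast at h1
  field_simp
  linarith [h1]

lemma keyReal (n m : ℕ) :
    ∑ k ∈ range (n + 1),
        (if k ≤ m then (if k = 0 then (1 : ℝ) else 2) * (-1) ^ k /
          ((n + k).factorial * (n - k).factorial * ((m - k).factorial * (m + k).factorial)) else 0)
      = 1 / (n.factorial * (m.factorial * (n + m).factorial)) := by
  set N := n + m with hN
  have hB := identB n m
  have hBR : ∑ k ∈ range (n + 1), (if k = 0 then (1 : ℝ) else 2) * ((-1) ^ k *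
      (N.choose (n + k)) * (N.choose (m + k))) = (N.choose n : ℝ) := by
    have := congrArg (fun z : ℤ => (z : ℝ)) hB
    push_cast at this
    convert this using 2
  have hterm : ∀ k ∈ range (n + 1),
      (if k ≤ m then (if k = 0 then (1 : ℝ) else 2) * (-1) ^ k /
          ((n + k).factorial * (n - k).factorial * ((m - k).factorial * (m + k).factorial)) else 0)
        = (if k = 0 then (1 : ℝ) else 2) * ((-1) ^ k *
            (N.choose (n + k)) * (N.choose (m + k))) / ((N.factorial : ℝ) * N.factorial) := by
    intro k hk
    simp only [Finset.mem_range] at hk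
    by_cases hkm : k ≤ m
    · rw [if_pos hkm, choose_cast_eq (n + k) N (by omega), choose_cast_eq (m + k) N (by omega)]
      have e1 : N - (n + k) = m - k := by omega
      have e2 : N - (m + k) = n - k := by omega
      rw [e1, e2]
      have f1 : ((n + k).factorial : ℝ) ≠ 0 := Nat.cast_ne_zero.mpr (Nat.factorial_ne_zero _)
      have f2 : ((n - k).factorial : ℝ) ≠ 0 := Nat.cast_ne_zero.mpr (Nat.factorial_ne_zero _)
      have f3 : ((m - k).factorial : ℝ) ≠ 0 := Nat.cast_ne_zero.mpr (Nat.factorial_ne_zero _)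
      have f4 : ((m + k).factorial : ℝ) ≠ 0 := Nat.cast_ne_zero.mpr (Nat.factorial_ne_zero _)
      have f5 : (N.factorial : ℝ) ≠ 0 := Nat.cast_ne_zero.mpr (Nat.factorial_ne_zero _)
      field_simp
    · rw [if_neg hkm, Nat.choose_eq_zero_of_lt (show N < n + k by omega)]
      simp
  rw [Finset.sum_congr rfl hterm, ← Finset.sum_div, hBR,
    choose_cast_eq n N (by omega), show N - n = m by omega]
  have f1 : (n.factorial : ℝ) ≠ 0 := Nat.cast_ne_zero.mpr (Nat.factorial_ne_zero _)
  have f2 : (m.factorial : ℝ) ≠ 0 := Nat.cast_ne_zero.mpr (Nat.factorial_ne_zero _)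
  have f5 : (N.factorial : ℝ) ≠ 0 := Nat.cast_ne_zero.mpr (Nat.factorial_ne_zero _)
  field_simp

lemma besselJ_nat' (n : ℕ) (t : ℝ) :
    besselJ (n : ℝ) t = (t / 2) ^ n *
      ∑' k : ℕ, (-1) ^ k / (k.factorial * (k + n).factorial) * (t / 2) ^ (2 * k) := by
  rw [besselJ, Real.rpow_natCast]
  congr 1
  refine tsum_congr fun k => ?_
  have h1 : Real.Gamma ((k : ℝ) + 1) = k.factorial := Real.Gamma_nat_eq_factorial k
  have h2 : Real.Gamma ((k : ℝ) + (n : ℝ) + 1) = (k + n).factorial := by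
    rw [show ((k : ℝ) + (n : ℝ) + 1) = (((k + n : ℕ) : ℝ) + 1) by push_cast; ring,
      Real.Gamma_nat_eq_factorial]
  rw [h1, h2]

lemma summJ (c : ℕ) (x : ℝ) :
    Summable (fun k : ℕ => (-1) ^ k / (k.factorial * (k + c).factorial) * x ^ (2 * k)) := by
  have h : Summable (fun k : ℕ =>
      |(-1) ^ k / ((k.factorial : ℝ) * (k + c).factorial) * x ^ (2 * k)|) := by
    refine Summable.of_nonneg_of_le (fun k => abs_nonneg _) ?_
      (Real.summable_pow_div_factorial (x ^ 2))
    intro k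
    have hx2 : (0 : ℝ) ≤ (x ^ 2) ^ k := pow_nonneg (sq_nonneg x) k
    have habs : |(-1 : ℝ) ^ k / (k.factorial * (k + c).factorial) * x ^ (2 * k)|
        = (x ^ 2) ^ k / ((k.factorial : ℝ) * (k + c).factorial) := by
      rw [abs_mul, abs_div, abs_pow, abs_neg, abs_one, one_pow, pow_mul, abs_pow,
        abs_of_nonneg (sq_nonneg x), abs_of_nonneg (show (0:ℝ) ≤ (k.factorial : ℝ) * (k + c).factorial by positivity)]
      ring
    rw [habs]
    gcongr
    exact_mod_cast Nat.le_mul_of_pos_right _ (Nat.factorial_pos _)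
  exact h.of_abs

lemma tsum_shift (k : ℕ) (h : ℕ → ℝ) :
    ∑' m : ℕ, (if k ≤ m then h m else 0) = ∑' j : ℕ, h (j + k) := by
  have hinj : Function.Injective (fun j : ℕ => j + k) := add_left_injective k
  have hsupp : Function.support (fun m : ℕ => if k ≤ m then h m else 0)
      ⊆ Set.range (fun j : ℕ => j + k) := by
    intro m hm
    simp only [Function.mem_support, ne_eq] at hm
    by_cases hkm : k ≤ m
    · exact ⟨m - k, show m - k + k = m by omega⟩
    · simp [hkm] at hm
  rw [← Function.Injective.tsum_eq hinj hsupp]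
  refine tsum_congr fun j => ?_
  rw [if_pos (by omega)]

lemma summable_shift (k : ℕ) (h : ℕ → ℝ) (hs : Summable (fun j : ℕ => h (j + k))) :
    Summable (fun m : ℕ => if k ≤ m then h m else 0) := by
  have hinj : Function.Injective (fun j : ℕ => j + k) := add_left_injective k
  have hzero : ∀ m ∉ Set.range (fun j : ℕ => j + k), (if k ≤ m then h m else 0) = 0 := by
    intro m hm
    rw [if_neg]
    intro hkm
    exact hm ⟨m - k, show m - k + k = m by omega⟩
  rw [← Function.Injective.summable_iff hinj hzero]
  refine hs.congr fun j => ?_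
  simp only [Function.comp_apply]
  rw [if_pos (by omega)]

lemma npowsR (m k : ℕ) (h : k ≤ m) : (-1 : ℝ) ^ (m - k) = (-1) ^ m * (-1) ^ k := by
  rw [← pow_add, neg_one_pow_eq_pow_mod_two, neg_one_pow_eq_pow_mod_two (n := m + k)]
  congr 1
  omega


/-- **Finite expansion of Bessel functions of integer order (Corollary 3).** For every
`n ≥ 0` and `t > 0`:
`(1/n!)(2/t)^n J_n(t) = Σ_{k=0}^{n} ε_k J_{2k}(t)/((n+k)!(n-k)!)` with `ε_0 = 1` and
`ε_k = 2` for `k ≥ 1`. -/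
theorem bessel_integer_order_finite_expansion (n : ℕ) (t : ℝ) (ht : 0 < t) :
    (1 / (Nat.factorial n : ℝ)) * (2 / t) ^ n * besselJ (n : ℝ) t =
      ∑ k ∈ Finset.range (n + 1),
        (if k = 0 then (1 : ℝ) else 2) * besselJ ((2 * k : ℕ) : ℝ) t /
          ((Nat.factorial (n + k)) * (Nat.factorial (n - k))) := by
  have htne : t ≠ 0 := ne_of_gt ht
  set x : ℝ := t / 2 with hx
  set u : ℕ → ℕ → ℝ := fun k m => if k ≤ m then
      ((if k = 0 then (1 : ℝ) else 2) / ((n + k).factorial * (n - k).factorial)) *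
        ((-1) ^ (m - k) / ((m - k).factorial * (m + k).factorial)) * x ^ (2 * m)
    else 0 with hu
  have hfun_eq : ∀ k j : ℕ,
      ((if k = 0 then (1 : ℝ) else 2) / ((n + k).factorial * (n - k).factorial)) *
        ((-1) ^ (j + k - k) / ((j + k - k).factorial * (j + k + k).factorial)) * x ^ (2 * (j + k))
      = ((if k = 0 then (1 : ℝ) else 2) / ((n + k).factorial * (n - k).factorial) * x ^ (2 * k)) *
          ((-1) ^ j / (j.factorial * (j + 2 * k).factorial) * x ^ (2 * j)) := by
    intro k j
    have e1 : j + k - k = j := by omega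
    have e2 : j + k + k = j + 2 * k := by omega
    have e3 : 2 * (j + k) = 2 * j + 2 * k := by ring
    rw [e1, e2, e3, pow_add]
    ring
  have hsum_u : ∀ k : ℕ, Summable (u k) := by
    intro k
    apply summable_shift
    refine (((summJ (2 * k) x).mul_left
      ((if k = 0 then (1 : ℝ) else 2) / ((n + k).factorial * (n - k).factorial) * x ^ (2 * k))).congr
      fun j => ?_)
    exact (hfun_eq k j).symm
  have hu_tsum : ∀ k : ℕ,
      ∑' m, u k m = (if k = 0 then (1 : ℝ) else 2) / ((n + k).factorial * (n - k).factorial) *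
        (x ^ (2 * k) * ∑' j : ℕ, (-1) ^ j / (j.factorial * (j + 2 * k).factorial) * x ^ (2 * j)) := by
    intro k
    rw [hu]
    rw [tsum_shift k]
    rw [tsum_congr (hfun_eq k), tsum_mul_left, mul_assoc]
  have hRHS : ∑ k ∈ Finset.range (n + 1),
      (if k = 0 then (1 : ℝ) else 2) * besselJ ((2 * k : ℕ) : ℝ) t /
        ((Nat.factorial (n + k)) * (Nat.factorial (n - k)))
      = ∑ k ∈ Finset.range (n + 1), ∑' m, u k m := by
    refine Finset.sum_congr rfl fun k _ => ?_
    rw [besselJ_nat' (2 * k) t, ← hx, hu_tsum k]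
    ring
  rw [hRHS, ← Summable.tsum_finsetSum (fun k _ => hsum_u k), besselJ_nat' n t, ← hx]
  set S : ℝ := ∑' k : ℕ, (-1) ^ k / (k.factorial * (k + n).factorial) * x ^ (2 * k) with hS
  have h2 : ((2 : ℝ) / t) ^ n * x ^ n = 1 := by
    rw [← mul_pow, hx]
    field_simp
    simp
  have hL : 1 / (n.factorial : ℝ) * (2 / t) ^ n * (x ^ n * S) = 1 / (n.factorial : ℝ) * S := by
    calc 1 / (n.factorial : ℝ) * (2 / t) ^ n * (x ^ n * S)
        = ((2 / t) ^ n * x ^ n) * (1 / (n.factorial : ℝ) * S) := by ring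
      _ = 1 / (n.factorial : ℝ) * S := by rw [h2, one_mul]
  rw [hL, hS, tsum_mul_left.symm]
  refine tsum_congr fun m => ?_
  have hterm : ∀ k ∈ Finset.range (n + 1), u k m = ((-1) ^ m * x ^ (2 * m)) *
      (if k ≤ m then (if k = 0 then (1 : ℝ) else 2) * (-1) ^ k /
        ((n + k).factorial * (n - k).factorial * ((m - k).factorial * (m + k).factorial)) else 0) := by
    intro k _
    by_cases hkm : k ≤ m
    · simp only [hu]
      rw [if_pos hkm, if_pos hkm, npowsR m k hkm]
      ring
    · simp [hu, hkm]
  rw [Finset.sum_congr rfl hterm, ← Finset.mul_sum, keyReal n m,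
    show m + n = n + m from Nat.add_comm m n]
  ring

end
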